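/- arXiv:2405.06979 — 3 statements merged into one kernel-verified Lean document; each statement's English description precedes it below -/
import Mathlib

section
/- One-step descent under the weak growth condition: Let E be a real Hilbert space and f : E → ℝ an L-smooth function (L > 0) with gradient ∇f. Fix θ ∈ E, and let g : Ω → E be a square-integrable random vector on a probability space (Ω, P) with E[g] = ∇f(θ) and E[‖g − ∇f(θ)‖²] ≤ (c/2)‖∇f(θ)‖² + σ², where c ≥ 0 and σ ≥ 0. If the step size η > 0 satisfies ηL(1 + c/2) ≤ 1, then E[f(θ − η g)] ≤ f(θ) − (η/2)‖∇f(θ)‖² + (η² L σ²)/2. -/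
open MeasureTheory

lemma descent_lemma
    {E : Type*} [NormedAddCommGroup E] [InnerProductSpace ℝ E] [CompleteSpace E]
    (f : E → ℝ) (f' : E → E) (L : ℝ) (hL : 0 < L)
    (hgrad : ∀ x, HasGradientAt f (f' x) x)
    (hsmooth : ∀ x y, ‖f' x - f' y‖ ≤ L * ‖x - y‖)
    (x v : E) :
    f (x + v) ≤ f x + inner ℝ (f' x) v + L / 2 * ‖v‖ ^ 2 := by
  have hlip : LipschitzWith (Real.toNNReal L) f' := by
    apply LipschitzWith.of_dist_le_mul
    intro a b
    simpa [dist_eq_norm, Real.coe_toNNReal _ hL.le] using hsmooth a b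
  have hcont : Continuous f' := hlip.continuous
  set φ : ℝ → ℝ := fun t => f (x + t • v) with hφ
  have hderiv : ∀ t : ℝ, HasDerivAt φ (inner ℝ (f' (x + t • v)) v) t := by
    intro t
    have h1 : HasDerivAt (fun t : ℝ => x + t • v) v t := by
      simpa using ((hasDerivAt_id t).smul_const v).const_add x
    have h2 := (hgrad (x + t • v)).hasFDerivAt
    have := h2.comp_hasDerivAt t h1
    simp only [InnerProductSpace.toDual_apply_apply] at this; exact this
  have hcont' : Continuous fun t : ℝ => (inner ℝ (f' (x + t • v)) v : ℝ) := by
    exact (hcont.comp (by continuity)).inner continuous_const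
  have hFTC : f (x + v) - f x = ∫ t in (0:ℝ)..1, inner ℝ (f' (x + t • v)) v := by
    have := intervalIntegral.integral_eq_sub_of_hasDerivAt (a := (0:ℝ)) (b := 1)
      (f := φ) (f' := fun t => inner ℝ (f' (x + t • v)) v)
      (fun t _ => hderiv t) (hcont'.intervalIntegrable 0 1)
    simpa [hφ] using this.symm
  have hbound : ∀ t ∈ Set.Icc (0:ℝ) 1,
      (inner ℝ (f' (x + t • v)) v : ℝ) ≤ inner ℝ (f' x) v + L * t * ‖v‖ ^ 2 := by
    intro t ht
    have : (inner ℝ (f' (x + t • v)) v : ℝ) - inner ℝ (f' x) v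
        = inner ℝ (f' (x + t • v) - f' x) v := by
      rw [inner_sub_left]
    have h3 : (inner ℝ (f' (x + t • v) - f' x) v : ℝ) ≤ L * t * ‖v‖ ^ 2 := by
      calc (inner ℝ (f' (x + t • v) - f' x) v : ℝ)
          ≤ ‖f' (x + t • v) - f' x‖ * ‖v‖ := real_inner_le_norm _ _
        _ ≤ (L * ‖(x + t • v) - x‖) * ‖v‖ := by
            gcongr; exact hsmooth _ _
        _ = L * t * ‖v‖ ^ 2 := by
            rw [add_sub_cancel_left, norm_smul]
            simp [Real.norm_eq_abs, abs_of_nonneg ht.1]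
            ring
    linarith [this ▸ h3]
  have hint : (∫ t in (0:ℝ)..1, inner ℝ (f' (x + t • v)) v : ℝ)
      ≤ ∫ t in (0:ℝ)..1, (inner ℝ (f' x) v + L * t * ‖v‖ ^ 2) := by
    apply intervalIntegral.integral_mono_on (by norm_num)
      (hcont'.intervalIntegrable 0 1)
    · exact (Continuous.intervalIntegrable (by continuity) 0 1)
    · exact hbound
  have hval : (∫ t in (0:ℝ)..1, (inner ℝ (f' x) v + L * t * ‖v‖ ^ 2) : ℝ)
      = inner ℝ (f' x) v + L / 2 * ‖v‖ ^ 2 := by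
    rw [intervalIntegral.integral_add (intervalIntegrable_const)
      (Continuous.intervalIntegrable (by continuity) 0 1)]
    have : (∫ t in (0:ℝ)..1, L * t * ‖v‖ ^ 2) = L / 2 * ‖v‖ ^ 2 := by
      have : (fun t : ℝ => L * t * ‖v‖ ^ 2) = fun t : ℝ => (L * ‖v‖ ^ 2) * t := by
        funext t; ring
      rw [this, intervalIntegral.integral_const_mul, integral_id]
      ring
    rw [this]
    simp
  linarith [hFTC, hint.trans_eq hval]

set_option maxHeartbeats 1000000 in
/-- One-step descent inequality under the weak growth condition. -/
theorem one_step_descent_weak_growth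
    {E : Type*} [NormedAddCommGroup E] [InnerProductSpace ℝ E] [CompleteSpace E]
    {Ω : Type*} [MeasurableSpace Ω] (P : Measure Ω) [IsProbabilityMeasure P]
    (f : E → ℝ) (f' : E → E) (L : ℝ) (hL : 0 < L)
    (hgrad : ∀ x, HasGradientAt f (f' x) x)
    (hsmooth : ∀ x y, ‖f' x - f' y‖ ≤ L * ‖x - y‖)
    (θ : E) (g : Ω → E) (hg2 : MemLp g 2 P)
    (hmean : ∫ ω, g ω ∂P = f' θ)
    (c σ : ℝ) (hc : 0 ≤ c) (hσ : 0 ≤ σ)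
    (hvar : ∫ ω, ‖g ω - f' θ‖ ^ 2 ∂P ≤ c / 2 * ‖f' θ‖ ^ 2 + σ ^ 2)
    (η : ℝ) (hη : 0 < η) (hstep : η * L * (1 + c / 2) ≤ 1) :
    ∫ ω, f (θ - η • g ω) ∂P ≤
      f θ - η / 2 * ‖f' θ‖ ^ 2 + η ^ 2 * L * σ ^ 2 / 2 := by
  set μ := f' θ with hμ
  -- integrability facts
  have hg1 : Integrable g P := hg2.integrable one_le_two
  have hgsq : Integrable (fun ω => ‖g ω‖ ^ 2) P :=
    (memLp_two_iff_integrable_sq_norm hg2.aestronglyMeasurable).mp hg2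
  have hgm2 : MemLp (fun ω => g ω - μ) 2 P := hg2.sub (memLp_const μ)
  have hgmsq : Integrable (fun ω => ‖g ω - μ‖ ^ 2) P :=
    (memLp_two_iff_integrable_sq_norm hgm2.aestronglyMeasurable).mp hgm2
  have hinner : Integrable (fun ω => (inner ℝ μ (g ω) : ℝ)) P := by
    simpa using ((innerSL ℝ μ).integrable_comp hg1)
  -- pointwise descent bound
  have hpt : ∀ ω, f (θ - η • g ω) ≤
      f θ - η * inner ℝ μ (g ω) + L * η ^ 2 / 2 * ‖g ω‖ ^ 2 := by
    intro ω
    have := descent_lemma f f' L hL hgrad hsmooth θ (-(η • g ω))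
    have h2 : (inner ℝ μ (-(η • g ω)) : ℝ) = -(η * inner ℝ μ (g ω)) := by
      rw [inner_neg_right, inner_smul_right]
    rw [h2] at this
    have h3 : ‖-(η • g ω)‖ ^ 2 = η ^ 2 * ‖g ω‖ ^ 2 := by
      rw [norm_neg, norm_smul]
      simp [Real.norm_eq_abs, mul_pow, sq_abs]
    rw [h3] at this
    calc f (θ - η • g ω) = f (θ + -(η • g ω)) := by rw [sub_eq_add_neg]
      _ ≤ f θ + -(η * inner ℝ μ (g ω)) + L / 2 * (η ^ 2 * ‖g ω‖ ^ 2) := this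
      _ = f θ - η * inner ℝ μ (g ω) + L * η ^ 2 / 2 * ‖g ω‖ ^ 2 := by ring
  -- integrability of RHS and LHS
  have hRHS : Integrable (fun ω => f θ - η * inner ℝ μ (g ω)
      + L * η ^ 2 / 2 * ‖g ω‖ ^ 2) P := by
    exact ((integrable_const (f θ)).sub (hinner.const_mul η)).add (hgsq.const_mul _)
  have hfc : Continuous f := by
    have : Differentiable ℝ f := fun x => (hgrad x).differentiableAt
    exact this.continuous
  have hLHSm : AEStronglyMeasurable (fun ω => f (θ - η • g ω)) P := by
    exact hfc.comp_aestronglyMeasurable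
      ((aestronglyMeasurable_const.sub (hg2.aestronglyMeasurable.const_smul η)))
  have hlow : ∀ ω, f θ - η * inner ℝ μ (g ω) - 2 * L * η ^ 2 * ‖g ω‖ ^ 2
      ≤ f (θ - η • g ω) := by
    intro ω
    have := descent_lemma f f' L hL hgrad hsmooth (θ - η • g ω) (η • g ω)
    have he : θ - η • g ω + η • g ω = θ := by abel
    rw [he] at this
    have hib : (inner ℝ (f' (θ - η • g ω)) (η • g ω) : ℝ)
        ≤ η * inner ℝ μ (g ω) + L * η ^ 2 * ‖g ω‖ ^ 2 := by
      have hsplit : (inner ℝ (f' (θ - η • g ω)) (η • g ω) : ℝ)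
          = inner ℝ μ (η • g ω) + inner ℝ (f' (θ - η • g ω) - μ) (η • g ω) := by
        rw [inner_sub_left]; ring
      have hb : (inner ℝ (f' (θ - η • g ω) - μ) (η • g ω) : ℝ)
          ≤ L * η ^ 2 * ‖g ω‖ ^ 2 := by
        calc (inner ℝ (f' (θ - η • g ω) - μ) (η • g ω) : ℝ)
            ≤ ‖f' (θ - η • g ω) - μ‖ * ‖η • g ω‖ := real_inner_le_norm _ _
          _ ≤ (L * ‖(θ - η • g ω) - θ‖) * ‖η • g ω‖ := by
              gcongr; exact hsmooth _ _
          _ = L * η ^ 2 * ‖g ω‖ ^ 2 := by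
              have : θ - η • g ω - θ = -(η • g ω) := by abel
              rw [this, norm_neg, norm_smul]
              simp [Real.norm_eq_abs, abs_of_nonneg hη.le]
              ring
      rw [hsplit, inner_smul_right]
      linarith
    have hnrm : L / 2 * ‖η • g ω‖ ^ 2 ≤ L * η ^ 2 / 2 * ‖g ω‖ ^ 2 := by
      rw [norm_smul]
      simp [Real.norm_eq_abs, mul_pow, sq_abs]
      ring_nf
      nlinarith [sq_nonneg (‖g ω‖), sq_nonneg η, hL.le]
    nlinarith
  have hLHSint : Integrable (fun ω => f (θ - η • g ω)) P := by
    apply Integrable.mono' (g := fun ω => |f θ| + η * ‖(inner ℝ μ (g ω) : ℝ)‖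
        + 2 * L * η ^ 2 * ‖g ω‖ ^ 2)
      (((integrable_const _).add ((hinner.norm).const_mul η)).add (hgsq.const_mul _))
      hLHSm
    filter_upwards with ω
    rw [Real.norm_eq_abs, abs_le]
    constructor
    all_goals {
      have h1 := hlow ω
      have h1' := hpt ω
      have h2a : η * inner ℝ μ (g ω) ≤ η * ‖(inner ℝ μ (g ω) : ℝ)‖ := by
        rw [Real.norm_eq_abs]
        nlinarith [le_abs_self (inner ℝ μ (g ω) : ℝ), hη.le]
      have h2b : -(η * ‖(inner ℝ μ (g ω) : ℝ)‖) ≤ η * inner ℝ μ (g ω) := by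
        rw [Real.norm_eq_abs]
        nlinarith [neg_abs_le (inner ℝ μ (g ω) : ℝ), hη.le]
      have h4 : 0 ≤ L * η ^ 2 * ‖g ω‖ ^ 2 := by positivity
      linarith [neg_abs_le (f θ), le_abs_self (f θ)] }
  -- integrate the pointwise bound
  have hint : ∫ ω, f (θ - η • g ω) ∂P ≤
      ∫ ω, (f θ - η * inner ℝ μ (g ω) + L * η ^ 2 / 2 * ‖g ω‖ ^ 2) ∂P := by
    exact integral_mono hLHSint hRHS (fun ω => hpt ω)
  -- compute the RHS integral
  have hinner_int : ∫ ω, (inner ℝ μ (g ω) : ℝ) ∂P = ‖μ‖ ^ 2 := by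
    rw [integral_inner hg1 μ, hmean, real_inner_self_eq_norm_sq]
  -- variance decomposition
  have hvarid : ∫ ω, ‖g ω‖ ^ 2 ∂P = (∫ ω, ‖g ω - μ‖ ^ 2 ∂P) + ‖μ‖ ^ 2 := by
    have hptid : ∀ ω, ‖g ω‖ ^ 2
        = ‖g ω - μ‖ ^ 2 + 2 * inner ℝ μ (g ω) - ‖μ‖ ^ 2 := by
      intro ω
      have := norm_sub_sq_real (g ω) μ
      rw [real_inner_comm] at this
      linarith
    calc ∫ ω, ‖g ω‖ ^ 2 ∂P
        = ∫ ω, (‖g ω - μ‖ ^ 2 + 2 * inner ℝ μ (g ω) - ‖μ‖ ^ 2) ∂P := by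
          exact integral_congr_ae (Filter.Eventually.of_forall hptid)
      _ = (∫ ω, ‖g ω - μ‖ ^ 2 ∂P) + 2 * ‖μ‖ ^ 2 - ‖μ‖ ^ 2 := by
          rw [integral_sub (show Integrable
              (fun ω => ‖g ω - μ‖ ^ 2 + 2 * inner ℝ μ (g ω)) P from
              hgmsq.add (hinner.const_mul 2)) (integrable_const _),
            integral_add hgmsq ((hinner.const_mul 2) :
              Integrable (fun ω => (2:ℝ) * inner ℝ μ (g ω)) P),
            integral_const_mul, hinner_int]
          simp
      _ = (∫ ω, ‖g ω - μ‖ ^ 2 ∂P) + ‖μ‖ ^ 2 := by ring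
  have hS : ∫ ω, ‖g ω‖ ^ 2 ∂P ≤ (1 + c / 2) * ‖μ‖ ^ 2 + σ ^ 2 := by
    rw [hvarid]; linarith
  have hRHSval : ∫ ω, (f θ - η * inner ℝ μ (g ω) + L * η ^ 2 / 2 * ‖g ω‖ ^ 2) ∂P
      = f θ - η * ‖μ‖ ^ 2 + L * η ^ 2 / 2 * (∫ ω, ‖g ω‖ ^ 2 ∂P) := by
    rw [integral_add (show Integrable (fun ω => f θ - η * inner ℝ μ (g ω)) P from
        (integrable_const (f θ)).sub (hinner.const_mul η))
        ((hgsq.const_mul _) : Integrable (fun ω => L * η ^ 2 / 2 * ‖g ω‖ ^ 2) P),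
      integral_sub (integrable_const _)
        ((hinner.const_mul η) : Integrable (fun ω => η * inner ℝ μ (g ω)) P),
      integral_const, integral_const_mul, integral_const_mul, hinner_int]
    simp
  rw [hRHSval] at hint
  have hfin : f θ - η * ‖μ‖ ^ 2 + L * η ^ 2 / 2 * (∫ ω, ‖g ω‖ ^ 2 ∂P)
      ≤ f θ - η / 2 * ‖μ‖ ^ 2 + η ^ 2 * L * σ ^ 2 / 2 := by
    have h1 : L * η ^ 2 / 2 * (∫ ω, ‖g ω‖ ^ 2 ∂P)
        ≤ L * η ^ 2 / 2 * ((1 + c / 2) * ‖μ‖ ^ 2 + σ ^ 2) := by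
      apply mul_le_mul_of_nonneg_left hS
      positivity
    have h2 : L * η ^ 2 / 2 * ((1 + c / 2) * ‖μ‖ ^ 2) ≤ η / 2 * ‖μ‖ ^ 2 := by
      have key := mul_le_mul_of_nonneg_right hstep
        (show (0:ℝ) ≤ η / 2 * ‖μ‖ ^ 2 by positivity)
      nlinarith [key]
    nlinarith
  linarith
end

section
/- One-step contraction under the Polyak-Łojasiewicz condition: Let E be a real Hilbert space and f : E → ℝ an L-smooth function (L > 0) with gradient ∇f satisfying the Polyak-Łojasiewicz condition with parameter μ > 0 and attaining its minimum at θ*. Fix θ ∈ E, and let g : Ω → E be a square-integrable random vector on a probability space (Ω, P) with E[g] = ∇f(θ) and E[‖g − ∇f(θ)‖²] ≤ (c/2)‖∇f(θ)‖² + σ², where c ≥ 0 and σ ≥ 0. If the step size η > 0 satisfies ηL(1 + c/2) ≤ 1, then E[f(θ − η g)] − f(θ*) ≤ (1 − ημ)(f(θ) − f(θ*)) + (η² L σ²)/2. -/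
open MeasureTheory

lemma descent_lemma_aux {E : Type*} [NormedAddCommGroup E] [InnerProductSpace ℝ E]
    [CompleteSpace E]
    (f : E → ℝ) (f' : E → E) (L : ℝ)
    (hgrad : ∀ x, HasGradientAt f (f' x) x)
    (hsmooth : ∀ x y, ‖f' x - f' y‖ ≤ L * ‖x - y‖)
    (x v : E) :
    f (x + v) ≤ f x + inner ℝ (f' x) v + L / 2 * ‖v‖ ^ 2 := by
  set ψ : ℝ → ℝ := fun t => f (x + t • v) - t * inner ℝ (f' x) v - t ^ 2 * (L / 2 * ‖v‖ ^ 2)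
    with hψ
  have hd : ∀ t : ℝ, HasDerivAt ψ
      ((inner ℝ (f' (x + t • v)) v : ℝ) - inner ℝ (f' x) v - t * (L * ‖v‖ ^ 2)) t := by
    intro t
    have hc : HasDerivAt (fun t : ℝ => x + t • v) v t := by
      simpa using ((hasDerivAt_id t).smul_const v).const_add x
    have hf : HasDerivAt (fun t : ℝ => f (x + t • v)) ((inner ℝ (f' (x + t • v)) v : ℝ)) t := by
      have := (hgrad (x + t • v)).hasFDerivAt.comp_hasDerivAt t hc
      simp at this
      exact this
    have h2 : HasDerivAt (fun t : ℝ => t * (inner ℝ (f' x) v : ℝ)) (inner ℝ (f' x) v : ℝ) t := by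
      simpa using (hasDerivAt_id t).mul_const (inner ℝ (f' x) v : ℝ)
    have h3 : HasDerivAt (fun t : ℝ => t ^ 2 * (L / 2 * ‖v‖ ^ 2)) (t * (L * ‖v‖ ^ 2)) t := by
      have := (hasDerivAt_pow 2 t).mul_const (L / 2 * ‖v‖ ^ 2)
      refine this.congr_deriv ?_
      rw [show (2:ℕ) - 1 = 1 from rfl]
      push_cast
      ring
    exact (hf.sub h2).sub h3
  have key : ψ 1 ≤ ψ 0 := by
    have hanti : AntitoneOn ψ (Set.Icc (0:ℝ) 1) := by
      apply antitoneOn_of_deriv_nonpos (convex_Icc 0 1)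
      · exact (continuous_iff_continuousAt.2
          fun t => (hd t).differentiableAt.continuousAt).continuousOn
      · intro t _
        exact (hd t).differentiableAt.differentiableWithinAt
      · intro t ht
        rw [interior_Icc, Set.mem_Ioo] at ht
        rw [(hd t).deriv]
        have h1 : (inner ℝ (f' (x + t • v)) v : ℝ) - inner ℝ (f' x) v
            = inner ℝ (f' (x + t • v) - f' x) v := by rw [inner_sub_left]
        rw [h1]
        have h2 : (inner ℝ (f' (x + t • v) - f' x) v : ℝ) ≤ ‖f' (x + t • v) - f' x‖ * ‖v‖ :=
          real_inner_le_norm _ _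
        have h3 : ‖f' (x + t • v) - f' x‖ ≤ L * (t * ‖v‖) := by
          have := hsmooth (x + t • v) x
          simpa [norm_smul, abs_of_pos ht.1] using this
        nlinarith [norm_nonneg v, mul_le_mul_of_nonneg_right h3 (norm_nonneg v)]
    exact hanti (by norm_num) (by norm_num) (by norm_num)
  simp only [hψ, one_smul, one_pow, one_mul, zero_smul, add_zero, zero_mul, pow_two,
    mul_zero, sub_zero] at key
  linarith

/-- One-step contraction under the Polyak-Łojasiewicz condition. -/
theorem one_step_contraction_PL
    {E : Type*} [NormedAddCommGroup E] [InnerProductSpace ℝ E] [CompleteSpace E]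
    {Ω : Type*} [MeasurableSpace Ω] (P : Measure Ω) [IsProbabilityMeasure P]
    (f : E → ℝ) (f' : E → E) (L μ : ℝ) (hL : 0 < L) (hμ : 0 < μ)
    (hgrad : ∀ x, HasGradientAt f (f' x) x)
    (hsmooth : ∀ x y, ‖f' x - f' y‖ ≤ L * ‖x - y‖)
    (θstar : E) (hmin : ∀ x, f θstar ≤ f x)
    (hPL : ∀ θ, 2 * μ * (f θ - f θstar) ≤ ‖f' θ‖ ^ 2)
    (θ : E) (g : Ω → E) (hg2 : MemLp g 2 P)
    (hmean : ∫ ω, g ω ∂P = f' θ)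
    (c σ : ℝ) (hc : 0 ≤ c) (hσ : 0 ≤ σ)
    (hvar : ∫ ω, ‖g ω - f' θ‖ ^ 2 ∂P ≤ c / 2 * ‖f' θ‖ ^ 2 + σ ^ 2)
    (η : ℝ) (hη : 0 < η) (hstep : η * L * (1 + c / 2) ≤ 1) :
    (∫ ω, f (θ - η • g ω) ∂P) - f θstar ≤
      (1 - η * μ) * (f θ - f θstar) + η ^ 2 * L * σ ^ 2 / 2 := by
  set m : E := f' θ with hm
  -- integrability facts
  have hgi : Integrable g P := hg2.integrable (by norm_num)
  have hgm : Integrable (fun ω => g ω - m) P := hgi.sub (integrable_const m)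
  have hin : Integrable (fun ω => (inner ℝ m (g ω) : ℝ)) P := hgi.const_inner m
  have hsq : Integrable (fun ω => ‖g ω‖ ^ 2) P := (hg2.norm).integrable_sq
  have hsq2 : Integrable (fun ω => ‖g ω - m‖ ^ 2) P :=
    ((hg2.sub (memLp_const m)).norm).integrable_sq
  have hin2 : Integrable (fun ω => (inner ℝ m (g ω - m) : ℝ)) P := hgm.const_inner m
  -- pointwise descent bound
  set K : Ω → ℝ := fun ω => f θ - η * inner ℝ m (g ω) + L / 2 * (η ^ 2 * ‖g ω‖ ^ 2) with hK
  have hpt : ∀ ω, f (θ - η • g ω) ≤ K ω := by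
    intro ω
    have := descent_lemma_aux f f' L hgrad hsmooth θ (-(η • g ω))
    have e1 : θ + -(η • g ω) = θ - η • g ω := by abel
    have e2 : (inner ℝ (f' θ) (-(η • g ω)) : ℝ) = -(η * inner ℝ m (g ω)) := by
      rw [inner_neg_right, inner_smul_right]
    have e3 : ‖-(η • g ω)‖ ^ 2 = η ^ 2 * ‖g ω‖ ^ 2 := by
      rw [norm_neg, norm_smul, mul_pow, Real.norm_eq_abs, sq_abs]
    rw [e1, e2, e3] at this
    simpa [hK, ← sub_eq_add_neg] using this
  have hKa : Integrable (fun ω => f θ - η * inner ℝ m (g ω)) P :=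
    (integrable_const (f θ)).sub (hin.const_mul η)
  have hKb : Integrable (fun ω => L / 2 * (η ^ 2 * ‖g ω‖ ^ 2)) P :=
    ((hsq.const_mul (η ^ 2)).const_mul (L / 2))
  have hKi : Integrable K P := hKa.add hKb
  -- integrability of the composed function
  have fc : Continuous f :=
    continuous_iff_continuousAt.2 fun x => (hgrad x).differentiableAt.continuousAt
  have hmeas : AEStronglyMeasurable (fun ω => f (θ - η • g ω)) P :=
    fc.comp_aestronglyMeasurable
      (aestronglyMeasurable_const.sub (hg2.aestronglyMeasurable.const_smul η))
  have hbound : Integrable (fun ω => |K ω| + |f θstar|) P :=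
    hKi.abs.add (integrable_const _)
  have hfi : Integrable (fun ω => f (θ - η • g ω)) P := by
    refine Integrable.mono' hbound hmeas ?_
    filter_upwards with ω
    have h1 := hpt ω
    have h2 := hmin (θ - η • g ω)
    have h3 := le_abs_self (K ω)
    have h4 := neg_abs_le (f θstar)
    have h5 := abs_nonneg (K ω)
    have h6 := abs_nonneg (f θstar)
    rw [Real.norm_eq_abs, abs_le]
    constructor <;> linarith
  -- integrate the pointwise bound
  have hmono : ∫ ω, f (θ - η • g ω) ∂P ≤ ∫ ω, K ω ∂P := integral_mono hfi hKi hpt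
  -- compute ∫ K
  have hInner : ∫ ω, (inner ℝ m (g ω) : ℝ) ∂P = ‖m‖ ^ 2 := by
    rw [integral_inner hgi m, hmean, real_inner_self_eq_norm_sq]
  have hcross : ∫ ω, (inner ℝ m (g ω - m) : ℝ) ∂P = 0 := by
    rw [integral_inner hgm m, integral_sub hgi (integrable_const m), hmean, integral_const]
    simp
  have hExpand : ∫ ω, ‖g ω‖ ^ 2 ∂P = (∫ ω, ‖g ω - m‖ ^ 2 ∂P) + ‖m‖ ^ 2 := by
    have hpw : ∀ ω, ‖g ω‖ ^ 2 = ‖g ω - m‖ ^ 2 + 2 * inner ℝ m (g ω - m) + ‖m‖ ^ 2 := by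
      intro ω
      have h := norm_add_sq_real (g ω - m) m
      have e : g ω - m + m = g ω := by abel
      rw [e] at h
      rw [h, real_inner_comm]
    calc ∫ ω, ‖g ω‖ ^ 2 ∂P
        = ∫ ω, (‖g ω - m‖ ^ 2 + 2 * inner ℝ m (g ω - m) + ‖m‖ ^ 2) ∂P :=
          integral_congr_ae (Filter.Eventually.of_forall hpw)
      _ = (∫ ω, (‖g ω - m‖ ^ 2 + 2 * inner ℝ m (g ω - m)) ∂P) + ∫ ω, (‖m‖ ^ 2 : ℝ) ∂P :=
          integral_add (hsq2.add (hin2.const_mul 2)) (integrable_const _)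
      _ = (∫ ω, ‖g ω - m‖ ^ 2 ∂P) + (∫ ω, (2 * inner ℝ m (g ω - m) : ℝ) ∂P)
            + ∫ ω, (‖m‖ ^ 2 : ℝ) ∂P := by
          rw [integral_add hsq2 (hin2.const_mul 2)]
      _ = (∫ ω, ‖g ω - m‖ ^ 2 ∂P) + ‖m‖ ^ 2 := by
          rw [integral_const_mul, hcross, integral_const]
          simp
  have hKval : ∫ ω, K ω ∂P
      = f θ - η * ‖m‖ ^ 2 + L / 2 * (η ^ 2 * ∫ ω, ‖g ω‖ ^ 2 ∂P) := by
    calc ∫ ω, K ω ∂P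
        = (∫ ω, (f θ - η * inner ℝ m (g ω) : ℝ) ∂P)
            + ∫ ω, (L / 2 * (η ^ 2 * ‖g ω‖ ^ 2) : ℝ) ∂P := integral_add hKa hKb
      _ = ((∫ ω, (f θ : ℝ) ∂P) - ∫ ω, (η * inner ℝ m (g ω) : ℝ) ∂P)
            + ∫ ω, (L / 2 * (η ^ 2 * ‖g ω‖ ^ 2) : ℝ) ∂P := by
          rw [integral_sub (integrable_const (f θ)) (hin.const_mul η)]
      _ = f θ - η * ‖m‖ ^ 2 + L / 2 * (η ^ 2 * ∫ ω, ‖g ω‖ ^ 2 ∂P) := by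
          rw [integral_const, integral_const_mul, hInner, integral_const_mul,
            integral_const_mul]
          simp
  -- final arithmetic
  have hPLθ := hPL θ
  rw [← hm] at hPLθ
  have hM : (0:ℝ) ≤ ‖m‖ ^ 2 := by positivity
  have hA : (0:ℝ) ≤ ∫ ω, ‖g ω - m‖ ^ 2 ∂P := integral_nonneg fun ω => by positivity
  rw [hKval, hExpand] at hmono
  nlinarith [mul_le_mul_of_nonneg_left hvar (by positivity : (0:ℝ) ≤ L / 2 * η ^ 2),
    mul_le_mul_of_nonneg_right hstep
      (mul_nonneg (mul_nonneg hη.le hM) (by norm_num : (0:ℝ) ≤ 1/2)),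
    mul_le_mul_of_nonneg_left hPLθ (by positivity : (0:ℝ) ≤ η / 2)]
end

section
/- Variance bound for the mixture gradient: Let E be a real Hilbert space, (Ω, P) a probability space, and v ∈ E. Let g_id, g_fr, g_uf : Ω → E be square-integrable random vectors with E[g_id] = E[g_fr] = E[g_uf] = v and with E[‖g_id − v‖²] ≤ σ², E[‖g_fr − v‖²] ≤ (ε/2)‖v‖² + σ², E[‖g_uf − v‖²] ≤ (ν/2)‖v‖² + σ², where σ, ε, ν ≥ 0. For λ, τ ∈ [0,1], define the mixture g = λ g_id + (1−λ)(τ g_fr + (1−τ) g_uf). Then E[g] = v and E[‖g − v‖²] ≤ ((1−λ)(τ ε + (1−τ) ν)/2) ‖v‖² + σ². -/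
open MeasureTheory

lemma two_term_convex {E : Type*} [NormedAddCommGroup E] [InnerProductSpace ℝ E]
    (t : ℝ) (ht0 : 0 ≤ t) (ht1 : t ≤ 1) (x y : E) :
    ‖t • x + (1 - t) • y‖ ^ 2 ≤ t * ‖x‖ ^ 2 + (1 - t) * ‖y‖ ^ 2 := by
  have h1 : ‖t • x + (1 - t) • y‖ ≤ t * ‖x‖ + (1 - t) * ‖y‖ := by
    calc ‖t • x + (1 - t) • y‖ ≤ ‖t • x‖ + ‖(1 - t) • y‖ := norm_add_le _ _
    _ = t * ‖x‖ + (1 - t) * ‖y‖ := by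
        rw [norm_smul, norm_smul, Real.norm_eq_abs, Real.norm_eq_abs,
          abs_of_nonneg ht0, abs_of_nonneg (by linarith)]
  have h2 : ‖t • x + (1 - t) • y‖ ^ 2 ≤ (t * ‖x‖ + (1 - t) * ‖y‖) ^ 2 := by
    apply sq_le_sq' _ h1
    have := norm_nonneg (t • x + (1 - t) • y)
    nlinarith [norm_nonneg x, norm_nonneg y]
  nlinarith [h2, mul_nonneg (mul_nonneg ht0 (by linarith : (0:ℝ) ≤ 1 - t))
    (sq_nonneg (‖x‖ - ‖y‖))]

/-- Variance bound for the mixture stochastic gradient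
`g = λ g_id + (1−λ)(τ g_fr + (1−τ) g_uf)`. -/
theorem mixture_gradient_variance_bound
    {E : Type*} [NormedAddCommGroup E] [InnerProductSpace ℝ E] [CompleteSpace E]
    {Ω : Type*} [MeasurableSpace Ω] (P : Measure Ω) [IsProbabilityMeasure P]
    (v : E) (g_id g_fr g_uf : Ω → E)
    (hid2 : MemLp g_id 2 P) (hfr2 : MemLp g_fr 2 P) (huf2 : MemLp g_uf 2 P)
    (hid_mean : ∫ ω, g_id ω ∂P = v)
    (hfr_mean : ∫ ω, g_fr ω ∂P = v)
    (huf_mean : ∫ ω, g_uf ω ∂P = v)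
    (σ ε ν : ℝ) (hσ : 0 ≤ σ) (hε : 0 ≤ ε) (hν : 0 ≤ ν)
    (hid_var : ∫ ω, ‖g_id ω - v‖ ^ 2 ∂P ≤ σ ^ 2)
    (hfr_var : ∫ ω, ‖g_fr ω - v‖ ^ 2 ∂P ≤ ε / 2 * ‖v‖ ^ 2 + σ ^ 2)
    (huf_var : ∫ ω, ‖g_uf ω - v‖ ^ 2 ∂P ≤ ν / 2 * ‖v‖ ^ 2 + σ ^ 2)
    (lam τ : ℝ) (hlam : lam ∈ Set.Icc (0 : ℝ) 1) (hτ : τ ∈ Set.Icc (0 : ℝ) 1)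
    (g : Ω → E)
    (hg : g = fun ω => lam • g_id ω + (1 - lam) • (τ • g_fr ω + (1 - τ) • g_uf ω)) :
    (∫ ω, g ω ∂P = v) ∧
      ∫ ω, ‖g ω - v‖ ^ 2 ∂P ≤
        (1 - lam) * (τ * ε + (1 - τ) * ν) / 2 * ‖v‖ ^ 2 + σ ^ 2 := by
  obtain ⟨hl0, hl1⟩ := hlam
  obtain ⟨ht0, ht1⟩ := hτ
  have hid1 : Integrable g_id P := hid2.integrable (by norm_num)
  have hfr1 : Integrable g_fr P := hfr2.integrable (by norm_num)
  have huf1 : Integrable g_uf P := huf2.integrable (by norm_num)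
  have hmean : ∫ ω, g ω ∂P = v := by
    rw [hg]
    have hA : Integrable (fun ω => lam • g_id ω) P := hid1.smul lam
    have hB : Integrable (fun ω => τ • g_fr ω) P := hfr1.smul τ
    have hC : Integrable (fun ω => (1 - τ) • g_uf ω) P := huf1.smul (1 - τ)
    have hD : Integrable (fun ω => (1 - lam) • (τ • g_fr ω + (1 - τ) • g_uf ω)) P :=
      (hB.add hC).smul (1 - lam)
    rw [integral_add hA hD, integral_smul, integral_smul, integral_add hB hC,
      integral_smul, integral_smul, hid_mean, hfr_mean, huf_mean]
    module
  refine ⟨hmean, ?_⟩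
  -- integrability of the squared norms
  have iid : Integrable (fun ω => ‖g_id ω - v‖ ^ 2) P :=
    (hid2.sub (memLp_const v)).norm.integrable_sq
  have ifr : Integrable (fun ω => ‖g_fr ω - v‖ ^ 2) P :=
    (hfr2.sub (memLp_const v)).norm.integrable_sq
  have iuf : Integrable (fun ω => ‖g_uf ω - v‖ ^ 2) P :=
    (huf2.sub (memLp_const v)).norm.integrable_sq
  have hptwise : ∀ ω, ‖g ω - v‖ ^ 2 ≤
      lam * ‖g_id ω - v‖ ^ 2 + (1 - lam) * (τ * ‖g_fr ω - v‖ ^ 2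
        + (1 - τ) * ‖g_uf ω - v‖ ^ 2) := by
    intro ω
    have hrw : g ω - v = lam • (g_id ω - v)
        + (1 - lam) • (τ • (g_fr ω - v) + (1 - τ) • (g_uf ω - v)) := by
      rw [hg]; module
    rw [hrw]
    calc ‖lam • (g_id ω - v) + (1 - lam) • (τ • (g_fr ω - v) + (1 - τ) • (g_uf ω - v))‖ ^ 2
        ≤ lam * ‖g_id ω - v‖ ^ 2
          + (1 - lam) * ‖τ • (g_fr ω - v) + (1 - τ) • (g_uf ω - v)‖ ^ 2 :=
          two_term_convex lam hl0 hl1 _ _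
      _ ≤ lam * ‖g_id ω - v‖ ^ 2 + (1 - lam) * (τ * ‖g_fr ω - v‖ ^ 2
            + (1 - τ) * ‖g_uf ω - v‖ ^ 2) := by
          have := two_term_convex τ ht0 ht1 (g_fr ω - v) (g_uf ω - v)
          nlinarith
  have hbound : ∫ ω, ‖g ω - v‖ ^ 2 ∂P ≤
      lam * (∫ ω, ‖g_id ω - v‖ ^ 2 ∂P)
        + (1 - lam) * (τ * (∫ ω, ‖g_fr ω - v‖ ^ 2 ∂P)
          + (1 - τ) * (∫ ω, ‖g_uf ω - v‖ ^ 2 ∂P)) := by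
    have hInt : Integrable (fun ω => lam * ‖g_id ω - v‖ ^ 2
        + (1 - lam) * (τ * ‖g_fr ω - v‖ ^ 2 + (1 - τ) * ‖g_uf ω - v‖ ^ 2)) P :=
      ((iid.const_mul lam).add (((ifr.const_mul τ).add
        (iuf.const_mul (1 - τ))).const_mul (1 - lam)))
    have hgint : Integrable (fun ω => ‖g ω - v‖ ^ 2) P := by
      have hg2 : MemLp g 2 P := by
        rw [hg]
        exact (hid2.const_smul lam).add
          (((hfr2.const_smul τ).add (huf2.const_smul (1 - τ))).const_smul (1 - lam))
      exact (hg2.sub (memLp_const v)).norm.integrable_sq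
    calc ∫ ω, ‖g ω - v‖ ^ 2 ∂P
        ≤ ∫ ω, (lam * ‖g_id ω - v‖ ^ 2
          + (1 - lam) * (τ * ‖g_fr ω - v‖ ^ 2 + (1 - τ) * ‖g_uf ω - v‖ ^ 2)) ∂P :=
          integral_mono hgint hInt hptwise
      _ = lam * (∫ ω, ‖g_id ω - v‖ ^ 2 ∂P)
          + (1 - lam) * (τ * (∫ ω, ‖g_fr ω - v‖ ^ 2 ∂P)
            + (1 - τ) * (∫ ω, ‖g_uf ω - v‖ ^ 2 ∂P)) := by
          have hA : Integrable (fun ω => lam * ‖g_id ω - v‖ ^ 2) P := iid.const_mul lam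
          have hB : Integrable (fun ω => τ * ‖g_fr ω - v‖ ^ 2) P := ifr.const_mul τ
          have hC : Integrable (fun ω => (1 - τ) * ‖g_uf ω - v‖ ^ 2) P :=
            iuf.const_mul (1 - τ)
          have hD : Integrable (fun ω => (1 - lam) * (τ * ‖g_fr ω - v‖ ^ 2
              + (1 - τ) * ‖g_uf ω - v‖ ^ 2)) P := (hB.add hC).const_mul (1 - lam)
          rw [integral_add hA hD, integral_const_mul, integral_const_mul,
            integral_add hB hC, integral_const_mul, integral_const_mul]
  have h1 := mul_le_mul_of_nonneg_left hid_var hl0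
  have h2 := mul_le_mul_of_nonneg_left hfr_var
    (mul_nonneg (by linarith : (0:ℝ) ≤ 1 - lam) ht0)
  have h3 := mul_le_mul_of_nonneg_left huf_var
    (mul_nonneg (by linarith : (0:ℝ) ≤ 1 - lam) (by linarith : (0:ℝ) ≤ 1 - τ))
  nlinarith [h1, h2, h3, hbound]
end
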